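/- Let n ≥ 3 and let ℬ(ℤ) be the subgroup of Sp(2n,ℤ) consisting of integer symplectic matrices whose lower-left n×n block is the zero matrix and whose upper-left n×n block A satisfies det A = 1 (such matrices have the block form ((A, B), (0, A^{−T}))). Then every group homomorphism from ℬ(ℤ) to the multiplicative group ℂ* of nonzero complex numbers is trivial (identically 1). -/

import Mathlib

open Matrix Complex

noncomputable section

/-- Real `2n × 2n` matrices indexed by `Fin n ⊕ Fin n` (the two blocks). -/
abbrev SpMat (n : ℕ) := Matrix (Fin n ⊕ Fin n) (Fin n ⊕ Fin n) ℝ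

/-- The standard skew form `K = ((0,1),(-1,0))`. -/
def symplK (n : ℕ) : SpMat n := Matrix.fromBlocks 0 1 (-1) 0

/-- The real symplectic group `Sp(2n, ℝ)`: matrices with `gᵀ K g = K`. -/
def Sp (n : ℕ) : Set (SpMat n) := {g | gᵀ * symplK n * g = symplK n}

/-- The matrix `J = (1/√2) ((1, i·1), (i·1, 1))`. -/
def Jmat (n : ℕ) : Matrix (Fin n ⊕ Fin n) (Fin n ⊕ Fin n) ℂ :=
  (Real.sqrt 2 : ℂ)⁻¹ •
    Matrix.fromBlocks 1 (Complex.I • 1) (Complex.I • 1) 1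

variable {n : ℕ}

/-- `Φ(g)`: the upper-left `n × n` block of `J⁻¹ g J`. -/
def Phi (g : SpMat n) : Matrix (Fin n) (Fin n) ℂ :=
  ((Jmat n)⁻¹ * g.map (fun x => (x : ℂ)) * Jmat n).toBlocks₁₁

/-- `Ψ(g)`: the upper-right `n × n` block of `J⁻¹ g J`. -/
def Psi (g : SpMat n) : Matrix (Fin n) (Fin n) ℂ :=
  ((Jmat n)⁻¹ * g.map (fun x => (x : ℂ)) * Jmat n).toBlocks₁₂

/-- Entrywise complex conjugation of a matrix. -/
def conjM (M : Matrix (Fin n) (Fin n) ℂ) : Matrix (Fin n) (Fin n) ℂ :=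
  M.map (starRingEnd ℂ)

/-- The ℓ²-operator norm of a complex matrix. -/
def opNorm (Z : Matrix (Fin n) (Fin n) ℂ) : ℝ :=
  ‖Matrix.toEuclideanCLM (𝕜 := ℂ) Z‖

/-- `L(Z) = ∑_{k ≥ 1} (-1)^{k+1} Z^k / k`, a branch of `log (1 + Z)` for `‖Z‖ < 1`. -/
def matLog (Z : Matrix (Fin n) (Fin n) ℂ) : Matrix (Fin n) (Fin n) ℂ :=
  ∑' k : ℕ, ((-1 : ℂ) ^ k / (k + 1)) • Z ^ (k + 1)

/-- The Berezin cocycle `c(g₁,g₂) = Im tr L(Φ(g₁)⁻¹ Ψ(g₁) conj(Ψ(g₂)) Φ(g₂)⁻¹)`. -/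
def berezinC (g₁ g₂ : SpMat n) : ℝ :=
  (Matrix.trace (matLog ((Phi g₁)⁻¹ * Psi g₁ * conjM (Psi g₂) * (Phi g₂)⁻¹))).im

/-- `Sp(2n, ℤ)`: elements of `Sp(2n,ℝ)` with integer entries. -/
def SpZ (n : ℕ) : Set (SpMat n) :=
  {g | g ∈ Sp n ∧ ∀ i j, ∃ m : ℤ, g i j = (m : ℝ)}

/-- The subgroup `ℬ(ℤ) ⊂ Sp(2n,ℤ)` of block upper-triangular matrices
`((A,B),(0,A^{-T}))` with `det A = 1`. -/
def BZ (n : ℕ) : Set (SpMat n) :=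
  {g | g ∈ SpZ n ∧ g.toBlocks₂₁ = 0 ∧ (g.toBlocks₁₁).det = 1}

section Aux
namespace SLGen
open Matrix Matrix.TransvectionStruct

variable {ι : Type*} [Fintype ι] [DecidableEq ι]

lemma emod_natAbs_lt (a b : ℤ) (h : b ≠ 0) : (a % b).natAbs < b.natAbs := by
  have h1 : 0 ≤ a % b := Int.emod_nonneg a h
  have h2 : a % b < (b.natAbs : ℤ) := Int.emod_lt a h
  omega

lemma transvection_mulVec (i j : ι) (hij : i ≠ j) (c : ℤ) (v : ι → ℤ) :
    (transvection i j c).mulVec v = Function.update v i (v i + c * v j) := by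
  funext k
  simp only [transvection, add_mulVec, one_mulVec, Pi.add_apply]
  rcases eq_or_ne k i with rfl | hk
  · rw [Function.update_self]
    congr 1
    simp [mulVec, dotProduct, Matrix.single, ite_and, Finset.sum_ite_eq]
  · rw [Function.update_of_ne hk]
    have : (Matrix.single i j c).mulVec v k = 0 := by
      simp [mulVec, dotProduct, Matrix.single, ite_and, hk, Finset.sum_ite_eq]
      intro h; exact absurd h.symm hk
    rw [this, add_zero]

lemma sum_pair_rest {M : Type*} [AddCommMonoid M] (a b : ι) (hab : a ≠ b) (g : ι → M) :
    ∑ i, g i = g a + g b + ∑ i ∈ (Finset.univ.erase a).erase b, g i := by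
  rw [← Finset.add_sum_erase _ g (Finset.mem_univ a),
    ← Finset.add_sum_erase _ g (Finset.mem_erase.2 ⟨Ne.symm hab, Finset.mem_univ b⟩), add_assoc]

/-- Key Euclid step conclusion -/
lemma euclid (ℓ : ι) (hι : ∃ i : ι, i ≠ ℓ) :
    ∀ v : ι → ℤ, (∃ f : ι → ℤ, ∑ i, f i * v i = 1) →
    ∃ L : List (TransvectionStruct ι ℤ),
      ((L.map toMatrix).prod).mulVec v = Pi.single ℓ 1 := by
  suffices H : ∀ m : ℕ, ∀ v : ι → ℤ, (∑ i, (v i).natAbs) = m →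
      (∃ f : ι → ℤ, ∑ i, f i * v i = 1) →
      ∃ L : List (TransvectionStruct ι ℤ),
        ((L.map toMatrix).prod).mulVec v = Pi.single ℓ 1 by
    intro v hv; exact H _ v rfl hv
  intro m
  induction m using Nat.strong_induction_on with
  | _ m IH =>
  intro v hm hv
  by_cases hpair : ∃ a b : ι, a ≠ b ∧ v a ≠ 0 ∧ v b ≠ 0
  · -- reduction step
    have main : ∀ a b : ι, a ≠ b → v a ≠ 0 → v b ≠ 0 →
        (v a).natAbs ≤ (v b).natAbs →
        ∃ L : List (TransvectionStruct ι ℤ),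
          ((L.map toMatrix).prod).mulVec v = Pi.single ℓ 1 := by
      intro a b hab ha hb hle
      obtain ⟨f, hf⟩ := hv
      set q : ℤ := v b / v a with hq
      set v' : ι → ℤ := Function.update v b (v b % v a) with hv'
      have hupd : v b + (-q) * v a = v b % v a := by
        rw [Int.emod_def]; ring
      have hT : (transvection b a (-q)).mulVec v = v' := by
        rw [transvection_mulVec b a (Ne.symm hab) (-q) v, hupd]
      -- new measure smaller
      have hlt : (∑ i, (v' i).natAbs) < m := by
        rw [← hm]
        rw [sum_pair_rest a b hab (fun i => (v' i).natAbs),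
          sum_pair_rest a b hab (fun i => (v i).natAbs)]
        have h1 : v' a = v a := Function.update_of_ne hab _ v
        have h2 : v' b = v b % v a := Function.update_self _ _ _
        have h3 : ∀ i ∈ (Finset.univ.erase a).erase b, (v' i).natAbs = (v i).natAbs := by
          intro i hi
          rw [Finset.mem_erase, Finset.mem_erase] at hi
          rw [hv', Function.update_of_ne hi.1]
        rw [Finset.sum_congr rfl h3, h1, h2]
        have := emod_natAbs_lt (v b) (v a) ha
        omega
      -- new coprimality witness
      have hv'c : ∃ f' : ι → ℤ, ∑ i, f' i * v' i = 1 := by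
        refine ⟨Function.update f a (f a + q * f b), ?_⟩
        rw [sum_pair_rest a b hab] at hf ⊢
        have e1 : Function.update f a (f a + q * f b) a = f a + q * f b :=
          Function.update_self _ _ _
        have e2 : Function.update f a (f a + q * f b) b = f b :=
          Function.update_of_ne (Ne.symm hab) _ f
        have e3 : v' a = v a := Function.update_of_ne hab _ v
        have e4 : v' b = v b + (-q) * v a := by
          rw [hupd]; exact Function.update_self _ _ _
        have e5 : ∀ i ∈ (Finset.univ.erase a).erase b,
            Function.update f a (f a + q * f b) i * v' i = f i * v i := by
          intro i hi
          rw [Finset.mem_erase, Finset.mem_erase] at hi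
          rw [Function.update_of_ne hi.2.1, hv', Function.update_of_ne hi.1]
        rw [Finset.sum_congr rfl e5, e1, e2, e3, e4, ← hf]; ring
      obtain ⟨L', hL'⟩ := IH _ hlt v' rfl hv'c
      refine ⟨L' ++ [⟨b, a, Ne.symm hab, -q⟩], ?_⟩
      rw [List.map_append, List.prod_append]
      simp only [List.map_cons, List.map_nil, List.prod_cons, List.prod_nil, mul_one,
        toMatrix_mk]
      rw [← mulVec_mulVec, hT, hL']
    obtain ⟨a, b, hab, ha, hb⟩ := hpair
    rcases le_total (v a).natAbs (v b).natAbs with h | h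
    · exact main a b hab ha hb h
    · exact main b a (Ne.symm hab) hb ha h
  · -- base case : at most one nonzero coordinate
    push_neg at hpair
    obtain ⟨f, hf⟩ := hv
    have hex : ∃ i, v i ≠ 0 := by
      by_contra h
      push_neg at h
      simp only [h, mul_zero, Finset.sum_const_zero] at hf
      exact one_ne_zero hf.symm
    obtain ⟨i, hi⟩ := hex
    have hzero : ∀ k, k ≠ i → v k = 0 := by
      intro k hk
      by_contra hk0
      exact hi (hpair k i hk hk0)
    have hsum : ∑ k, f k * v k = f i * v i :=
      Finset.sum_eq_single i (fun k _ hk => by rw [hzero k hk, mul_zero])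
        (fun h => absurd (Finset.mem_univ i) h)
    have hfi : f i * v i = 1 := by rw [← hsum]; exact hf
    have hunit : v i = 1 ∨ v i = -1 :=
      Int.isUnit_iff.mp (IsUnit.of_mul_eq_one (a := v i) (f i) (by rw [mul_comm]; exact hfi))
    rcases eq_or_ne i ℓ with rfl | hiℓ
    · rcases hunit with h1 | h1
      · refine ⟨[], ?_⟩
        simp only [List.map_nil, List.prod_nil, one_mulVec]
        funext k
        rcases eq_or_ne k i with rfl | hk
        · simp [h1]
        · simp [hzero k hk, Pi.single_apply, hk]
      · obtain ⟨j, hj⟩ := hι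
        refine ⟨[⟨j, i, hj, -1⟩, ⟨i, j, Ne.symm hj, 2⟩, ⟨j, i, hj, -1⟩], ?_⟩
        simp only [List.map_cons, List.map_nil, List.prod_cons, List.prod_nil, mul_one,
          toMatrix_mk]
        rw [← mulVec_mulVec, ← mulVec_mulVec, transvection_mulVec _ _ hj,
          transvection_mulVec _ _ (Ne.symm hj), transvection_mulVec _ _ hj]
        funext k
        have hvj : v j = 0 := hzero j hj
        simp only [Function.update_apply, Pi.single_apply]
        split_ifs <;> simp_all <;> omega
    · rcases hunit with h1 | h1
      · refine ⟨[⟨i, ℓ, hiℓ, -1⟩, ⟨ℓ, i, Ne.symm hiℓ, 1⟩], ?_⟩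
        simp only [List.map_cons, List.map_nil, List.prod_cons, List.prod_nil, mul_one,
          toMatrix_mk]
        rw [← mulVec_mulVec, transvection_mulVec _ _ (Ne.symm hiℓ),
          transvection_mulVec _ _ hiℓ]
        funext k
        have hvℓ : v ℓ = 0 := hzero ℓ (Ne.symm hiℓ)
        simp only [Function.update_apply, Pi.single_apply]
        split_ifs <;> simp_all <;> omega
      · refine ⟨[⟨i, ℓ, hiℓ, 1⟩, ⟨ℓ, i, Ne.symm hiℓ, -1⟩], ?_⟩
        simp only [List.map_cons, List.map_nil, List.prod_cons, List.prod_nil, mul_one,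
          toMatrix_mk]
        rw [← mulVec_mulVec, transvection_mulVec _ _ (Ne.symm hiℓ),
          transvection_mulVec _ _ hiℓ]
        funext k
        have hvℓ : v ℓ = 0 := hzero ℓ (Ne.symm hiℓ)
        simp only [Function.update_apply, Pi.single_apply]
        split_ifs <;> simp_all <;> omega

lemma det_transvec_prod (L : List (TransvectionStruct ι ℤ)) :
    ((L.map toMatrix).prod).det = 1 := by
  induction L with
  | nil => simp
  | cons t L IH => simp [Matrix.det_mul, IH]

lemma adj_col (M : Matrix ι ι ℤ) (j₀ : ι) :
    ∑ k, M.adjugate j₀ k * M k j₀ = M.det := by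
  have := Matrix.adjugate_mul M
  have h := congrFun (congrFun this j₀) j₀
  simpa [Matrix.mul_apply, Matrix.one_apply] using h

section Pivot
open Sum
variable {N : ℕ}

lemma transvection_inr_inl (b : Fin N) (c : ℤ) :
    transvection (inr () : Fin N ⊕ Unit) (inl b) c =
      Matrix.fromBlocks (1 : Matrix (Fin N) (Fin N) ℤ) 0 (Matrix.single () b c)
        (1 : Matrix Unit Unit ℤ) := by
  have : Matrix.single (inr () : Fin N ⊕ Unit) (inl b) c =
      Matrix.fromBlocks (0 : Matrix (Fin N) (Fin N) ℤ) 0 (Matrix.single () b c)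
        (0 : Matrix Unit Unit ℤ) := by
    ext a b' ; rcases a with a | a <;> rcases b' with b' | b' <;>
      simp [Matrix.single, Matrix.fromBlocks]
  rw [transvection, this, ← Matrix.fromBlocks_one]
  rw [Matrix.fromBlocks_add]
  simp
  
lemma prod_rowclear (l : List (Matrix Unit (Fin N) ℤ)) :
    ((l.map (fun w => Matrix.fromBlocks (1 : Matrix (Fin N) (Fin N) ℤ) 0 w
        (1 : Matrix Unit Unit ℤ))).prod) =
      Matrix.fromBlocks 1 0 l.sum 1 := by
  induction l with
  | nil => simp [Matrix.fromBlocks_one]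
  | cons w l IH =>
    simp only [List.map_cons, List.prod_cons, List.sum_cons, IH,
      Matrix.fromBlocks_multiply]
    congr 1 <;> simp

/-- The key induction step over `Fin N ⊕ Unit`. -/
lemma key (M : Matrix (Fin N ⊕ Unit) (Fin N ⊕ Unit) ℤ) (hM : M.det = 1)
    (IH : ∀ A : Matrix (Fin N) (Fin N) ℤ, A.det = 1 →
      ∃ L : List (TransvectionStruct (Fin N) ℤ), A = (L.map toMatrix).prod) :
    ∃ L : List (TransvectionStruct (Fin N ⊕ Unit) ℤ), M = (L.map toMatrix).prod := by
  rcases Nat.eq_zero_or_pos N with hN | hN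
  · -- 1×1 case
    subst hN
    let e0 : Fin 1 ≃ (Fin 0 ⊕ Unit) :=
      ⟨fun _ => inr (), fun _ => 0, fun x => Subsingleton.elim _ _,
        by rintro (⟨_, h⟩ | ⟨⟩); exacts [absurd h (Nat.not_lt_zero _), rfl]⟩
    have hval : M (e0 0) (e0 0) = 1 := by
      have h1 : (M.submatrix e0 e0).det = 1 := by rw [Matrix.det_submatrix_equiv_self, hM]
      rw [Matrix.det_fin_one] at h1
      exact h1
    refine ⟨[], ?_⟩
    simp only [List.map_nil, List.prod_nil]
    ext a b
    rcases a with ⟨_, h⟩ | ⟨⟩; · exact absurd h (Nat.not_lt_zero _)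
    rcases b with ⟨_, h⟩ | ⟨⟩; · exact absurd h (Nat.not_lt_zero _)
    have : M (inr ()) (inr ()) = 1 := hval
    rw [this, Matrix.one_apply_eq]
  · have hι : ∃ i : Fin N ⊕ Unit, i ≠ inr () := ⟨inl ⟨0, hN⟩, by simp⟩
    obtain ⟨L₁, hL₁⟩ := euclid (inr ()) hι (fun i => M i (inr ()))
      ⟨fun k => M.adjugate (inr ()) k, by rw [adj_col, hM]⟩
    set P₁ := (L₁.map toMatrix).prod with hP₁
    set M₁ := P₁ * M with hM₁def
    have hcol : ∀ i, M₁ i (inr ()) = if i = inr () then 1 else 0 := by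
      intro i
      have : M₁ i (inr ()) = (P₁.mulVec fun k => M k (inr ())) i := by
        simp [hM₁def, Matrix.mul_apply, Matrix.mulVec, dotProduct]
      rw [this, hL₁, Pi.single_apply]
    set w : Matrix Unit (Fin N) ℤ := M₁.toBlocks₂₁ with hw
    have h12 : M₁.toBlocks₁₂ = 0 := by
      ext i u
      have := hcol (inl i)
      simpa [Matrix.toBlocks₁₂] using this
    have h22 : M₁.toBlocks₂₂ = 1 := by
      ext u u'
      have := hcol (inr u)
      simp only [if_pos rfl, reduceIte] at this
      simp [Matrix.toBlocks₂₂, Matrix.one_apply, this]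
    have hM₁ : M₁ = Matrix.fromBlocks M₁.toBlocks₁₁ 0 w 1 := by
      rw [← h12, ← h22]
      exact (Matrix.fromBlocks_toBlocks M₁).symm
    set L₂ : List (TransvectionStruct (Fin N ⊕ Unit) ℤ) :=
      List.ofFn (fun b : Fin N => ⟨inr (), inl b, by simp, -(w () b)⟩) with hL₂
    have hQ : (L₂.map toMatrix).prod = Matrix.fromBlocks 1 0 (-w) 1 := by
      have h1 : L₂.map toMatrix =
          (List.ofFn (fun b : Fin N => Matrix.single () b (-(w () b)))).map
            (fun w' => Matrix.fromBlocks 1 0 w' (1 : Matrix Unit Unit ℤ)) := by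
        rw [hL₂, List.map_ofFn, List.map_ofFn]
        congr 1
        funext b
        exact transvection_inr_inl b _
      have hsum : (List.ofFn fun b : Fin N => Matrix.single () b (-(w () b))).sum
          = -w := by
        rw [List.sum_ofFn]
        ext u b
        rcases u
        simp [Matrix.single, Finset.sum_ite_eq', Matrix.sum_apply]
      rw [h1, prod_rowclear, hsum]
    have hM₂ : M₁ * (L₂.map toMatrix).prod = Matrix.fromBlocks M₁.toBlocks₁₁ 0 0 1 := by
      rw [hQ]
      conv_lhs => rw [hM₁]
      rw [Matrix.fromBlocks_multiply]
      congr 1 <;> simp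
    have hdet : (M₁.toBlocks₁₁).det = 1 := by
      have h1 : (M₁ * (L₂.map toMatrix).prod).det = 1 := by
        rw [hM₁def, Matrix.det_mul, Matrix.det_mul, det_transvec_prod, det_transvec_prod, hM,
          one_mul, mul_one]
      rw [hM₂, Matrix.det_fromBlocks_zero₂₁, Matrix.det_one, mul_one] at h1
      exact h1
    obtain ⟨L₃, hL₃⟩ := IH _ hdet
    have hlift : (L₃.map (toMatrix ∘ sumInl Unit)).prod =
        Matrix.fromBlocks M₁.toBlocks₁₁ 0 0 1 := by
      have := sumInl_toMatrix_prod_mul (p := Unit) (1 : Matrix (Fin N) (Fin N) ℤ) L₃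
        (1 : Matrix Unit Unit ℤ)
      rw [Matrix.fromBlocks_one, mul_one, mul_one] at this
      rw [this, ← hL₃]
    refine ⟨(L₁.reverse.map TransvectionStruct.inv) ++ L₃.map (sumInl Unit) ++
      (L₂.reverse.map TransvectionStruct.inv), ?_⟩
    have hkey : P₁ * M * (L₂.map toMatrix).prod = (L₃.map (toMatrix ∘ sumInl Unit)).prod := by
      rw [hlift, ← hM₂, hM₁def]
    simp only [List.map_append, List.prod_append, List.map_map]
    rw [← hkey]
    have e1 : (L₁.reverse.map (toMatrix ∘ TransvectionStruct.inv)).prod * P₁ = 1 :=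
      reverse_inv_prod_mul_prod L₁
    have e2 : (L₂.map toMatrix).prod *
        (L₂.reverse.map (toMatrix ∘ TransvectionStruct.inv)).prod = 1 :=
      prod_mul_reverse_inv_prod L₂
    calc M = 1 * M * 1 := by rw [one_mul, mul_one]
    _ = ((L₁.reverse.map (toMatrix ∘ TransvectionStruct.inv)).prod * P₁) * M *
        ((L₂.map toMatrix).prod * (L₂.reverse.map (toMatrix ∘ TransvectionStruct.inv)).prod) := by
      rw [e1, e2]
    _ = (L₁.reverse.map (toMatrix ∘ TransvectionStruct.inv)).prod * (P₁ * M *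
        (L₂.map toMatrix).prod) * (L₂.reverse.map (toMatrix ∘ TransvectionStruct.inv)).prod := by
      noncomm_ring
  
end Pivot

/-- Every integer matrix of determinant one is a product of transvections. -/
theorem exists_transvec (Nn : ℕ) :
    ∀ M : Matrix (Fin Nn) (Fin Nn) ℤ, M.det = 1 →
      ∃ L : List (TransvectionStruct (Fin Nn) ℤ), M = (L.map toMatrix).prod := by
  induction Nn with
  | zero =>
    intro M _
    exact ⟨[], by simp [Subsingleton.elim M 1]⟩
  | succ N IH =>
    intro M hM
    have e : (Fin N ⊕ Unit) ≃ Fin (N + 1) :=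
      (Equiv.sumCongr (Equiv.refl (Fin N)) (Equiv.ofUnique Unit (Fin 1))).trans
        finSumFinEquiv
    have hdet : (M.submatrix e e).det = 1 := by rw [Matrix.det_submatrix_equiv_self, hM]
    obtain ⟨L, hL⟩ := key (M.submatrix e e) hdet IH
    refine ⟨L.map (reindexEquiv e), ?_⟩
    rw [List.map_map, toMatrix_reindexEquiv_prod, ← hL]
    simp [Matrix.reindexAlgEquiv_apply, Matrix.reindex_apply, Matrix.submatrix_submatrix]

end SLGen

namespace S14
open Matrix

variable {n : ℕ}

abbrev IM (n : ℕ) := Matrix (Fin n) (Fin n) ℤ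

def castM (A : IM n) : Matrix (Fin n) (Fin n) ℝ := (Int.castRingHom ℝ).mapMatrix A

lemma castM_mul (A B : IM n) : castM (A * B) = castM A * castM B :=
  map_mul ((Int.castRingHom ℝ).mapMatrix) A B

lemma castM_add (A B : IM n) : castM (A + B) = castM A + castM B :=
  map_add ((Int.castRingHom ℝ).mapMatrix) A B

lemma castM_one : castM (1 : IM n) = 1 := by simp [castM]

lemma castM_zero : castM (0 : IM n) = 0 := by simp [castM]

lemma castM_transpose (A : IM n) : castM Aᵀ = (castM A)ᵀ :=
  (Matrix.transpose_map).symm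

lemma castM_det (A : IM n) : (castM A).det = (A.det : ℝ) := (RingHom.map_det _ A).symm

lemma castM_inj : Function.Injective (castM (n := n)) :=
  fun _ _ h => Matrix.map_injective Int.cast_injective h

/-- generic block element of the Borel -/
def bm (A B D : IM n) : SpMat n := Matrix.fromBlocks (castM A) (castM B) 0 (castM D)

lemma sympl_form (A B D : Matrix (Fin n) (Fin n) ℝ) :
    (Matrix.fromBlocks A B 0 D)ᵀ * symplK n * Matrix.fromBlocks A B 0 D =
      Matrix.fromBlocks 0 (Aᵀ * D) (-(Dᵀ * A)) (Bᵀ * D - Dᵀ * B) := by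
  rw [symplK, Matrix.fromBlocks_transpose, Matrix.fromBlocks_multiply,
    Matrix.fromBlocks_multiply]
  congr 1 <;> simp <;> exact add_comm _ _

lemma bm_mem {A B D : IM n} (h1 : Aᵀ * D = 1) (h2 : Bᵀ * D = Dᵀ * B) (h3 : A.det = 1) :
    bm A B D ∈ BZ n := by
  have c1 : (castM A)ᵀ * castM D = 1 := by
    rw [← castM_transpose, ← castM_mul, h1, castM_one]
  have c2 : (castM D)ᵀ * castM A = 1 := by
    have := congrArg Matrix.transpose c1
    rwa [Matrix.transpose_mul, Matrix.transpose_transpose, Matrix.transpose_one] at this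
  have c3 : (castM B)ᵀ * castM D - (castM D)ᵀ * castM B = 0 := by
    rw [← castM_transpose, ← castM_mul, ← castM_transpose, ← castM_mul, h2, sub_self]
  refine ⟨⟨?_, ?_⟩, ?_, ?_⟩
  · show _ = _
    rw [bm, sympl_form, c1, c2, c3, symplK]
  · intro i j
    rcases i with i | i <;> rcases j with j | j <;>
      simp [bm, castM, Matrix.fromBlocks] <;> first | exact ⟨_, rfl⟩ | exact ⟨0, by simp⟩
  · simp [bm]
  · simp only [bm, Matrix.toBlocks_fromBlocks₁₁, castM_det, h3, Int.cast_one]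

lemma bm_mul (A B D A' B' D' : IM n) :
    bm A B D * bm A' B' D' = bm (A * A') (A * B' + B * D') (D * D') := by
  simp only [bm, Matrix.fromBlocks_multiply, castM_mul, castM_add]
  congr 1 <;> simp

/-- `m(A)` -/
def mm (A : IM n) : SpMat n := bm A 0 (A⁻¹)ᵀ

/-- `u(S)` -/
def uu (S : IM n) : SpMat n := bm 1 S 1

lemma mm_mem {A : IM n} (hA : A.det = 1) : mm A ∈ BZ n := by
  refine bm_mem ?_ (by simp) hA
  rw [← Matrix.transpose_mul, Matrix.nonsing_inv_mul _ (by simp [hA]), Matrix.transpose_one]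

lemma uu_mem {S : IM n} (hS : Sᵀ = S) : uu S ∈ BZ n := by
  refine bm_mem (by simp) (by simp [hS]) (by simp)

lemma mm_one : mm (1 : IM n) = 1 := by
  rw [mm, inv_one, Matrix.transpose_one, bm, castM_one, castM_zero, Matrix.fromBlocks_one]

lemma uu_zero : uu (0 : IM n) = 1 := by
  rw [uu, bm, castM_one, castM_zero, Matrix.fromBlocks_one]

lemma uu_mul (S T : IM n) : uu S * uu T = uu (S + T) := by
  rw [uu, uu, uu, bm_mul]
  congr 1 <;> simp [add_comm]

lemma mm_mul {A B : IM n} (hA : A.det = 1) (hB : B.det = 1) :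
    mm A * mm B = mm (A * B) := by
  rw [mm, mm, mm, bm_mul, Matrix.mul_inv_rev, Matrix.transpose_mul]
  congr 1 <;> simp

lemma mm_mul_uu {A : IM n} (S : IM n) (hA : A.det = 1) :
    mm A * uu S = bm A (A * S) (A⁻¹)ᵀ := by
  rw [mm, uu, bm_mul]
  congr 1 <;> simp

lemma mm_uu {A : IM n} (S : IM n) (hA : A.det = 1) :
    mm A * uu S = uu (A * S * Aᵀ) * mm A := by
  have hAt : Aᵀ * (A⁻¹)ᵀ = 1 := by
    rw [← Matrix.transpose_mul, Matrix.nonsing_inv_mul _ (by simp [hA]),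
      Matrix.transpose_one]
  have hX : A * S * Aᵀ * (A⁻¹)ᵀ = A * S := by
    rw [Matrix.mul_assoc, hAt, Matrix.mul_one]
  rw [mm_mul_uu S hA, uu, mm, bm_mul, one_mul, one_mul, one_mul, zero_add, hX]

lemma decomp {g : SpMat n} (hg : g ∈ BZ n) :
    ∃ A S : IM n, A.det = 1 ∧ Sᵀ = S ∧ g = mm A * uu S := by
  obtain ⟨⟨hsp, hint⟩, h21, h11⟩ := hg
  set Az : IM n := Matrix.of fun i j => (hint (Sum.inl i) (Sum.inl j)).choose with hAz
  set Bz : IM n := Matrix.of fun i j => (hint (Sum.inl i) (Sum.inr j)).choose with hBz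
  set Dz : IM n := Matrix.of fun i j => (hint (Sum.inr i) (Sum.inr j)).choose with hDz
  have hA : castM Az = g.toBlocks₁₁ := by
    ext i j; exact ((hint (Sum.inl i) (Sum.inl j)).choose_spec).symm
  have hB : castM Bz = g.toBlocks₁₂ := by
    ext i j; exact ((hint (Sum.inl i) (Sum.inr j)).choose_spec).symm
  have hD : castM Dz = g.toBlocks₂₂ := by
    ext i j; exact ((hint (Sum.inr i) (Sum.inr j)).choose_spec).symm
  have hgeq : g = Matrix.fromBlocks (castM Az) (castM Bz) 0 (castM Dz) := by
    rw [hA, hB, hD, ← h21, Matrix.fromBlocks_toBlocks]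
  -- symplectic equations
  have hsymp := hsp
  unfold Sp at hsymp
  change gᵀ * symplK n * g = symplK n at hsymp
  rw [hgeq, sympl_form] at hsymp
  have e1 : (castM Az)ᵀ * castM Dz = 1 := by
    have := congrArg Matrix.toBlocks₁₂ hsymp
    simpa [symplK, Matrix.toBlocks_fromBlocks₁₂] using this
  have e3 : (castM Bz)ᵀ * castM Dz - (castM Dz)ᵀ * castM Bz = 0 := by
    have := congrArg Matrix.toBlocks₂₂ hsymp
    simpa [symplK, Matrix.toBlocks_fromBlocks₂₂] using this
  have e1z : Azᵀ * Dz = 1 := by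
    apply castM_inj
    rw [castM_mul, castM_transpose, e1, castM_one]
  have e2z : Bzᵀ * Dz = Dzᵀ * Bz := by
    apply castM_inj
    rw [castM_mul, castM_transpose, castM_mul, castM_transpose]
    exact sub_eq_zero.mp e3
  have hdet : Az.det = 1 := by
    have : (castM Az).det = 1 := by rw [hA]; exact h11
    rw [castM_det] at this
    exact_mod_cast this
  have hDeq : Dz = (Az⁻¹)ᵀ := by
    rw [Matrix.transpose_nonsing_inv]
    exact (Matrix.inv_eq_right_inv e1z).symm
  refine ⟨Az, Az⁻¹ * Bz, hdet, ?_, ?_⟩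
  · rw [Matrix.transpose_mul, ← hDeq, e2z, hDeq, Matrix.transpose_transpose]
  · rw [mm_mul_uu _ hdet, ← Matrix.mul_assoc, Matrix.mul_nonsing_inv _ (by simp [hdet]),
      Matrix.one_mul, hgeq, bm, ← hDeq]

end S14

namespace S14T
open Matrix

variable {n : ℕ}

lemma stdT (i j : Fin n) (c : ℤ) : (Matrix.single i j c)ᵀ = Matrix.single j i c := by
  ext a b; simp [Matrix.single, Matrix.transpose_apply, and_comm]

lemma transvection_transpose (i j : Fin n) (c : ℤ) :
    (transvection i j c)ᵀ = transvection j i c := by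
  rw [transvection, transvection, Matrix.transpose_add, Matrix.transpose_one, stdT]

lemma idA {i j k : Fin n} (hij : i ≠ j) (hjk : j ≠ k) (hik : i ≠ k) (c : ℤ) :
    transvection i j c * (Matrix.single j k 1 + Matrix.single k j 1) * transvection j i c =
      (Matrix.single j k 1 + Matrix.single k j 1) +
        (Matrix.single i k c + Matrix.single k i c) := by
  simp only [transvection, add_mul, mul_add, Matrix.one_mul, Matrix.mul_one,
    Matrix.single_mul_single_same, Matrix.single_mul_single_of_ne, hij, hjk, hik,
    hij.symm, hjk.symm, hik.symm, Ne, not_false_iff, mul_one, one_mul, Matrix.zero_mul, Matrix.mul_zero]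
  abel

lemma idB {i j : Fin n} (hij : i ≠ j) (c : ℤ) :
    transvection i j c * Matrix.single j j 1 * transvection j i c =
      Matrix.single j j 1 +
        ((Matrix.single i j c + Matrix.single j i c) + Matrix.single i i (c * c)) := by
  simp only [transvection, add_mul, mul_add, Matrix.one_mul, Matrix.mul_one,
    Matrix.single_mul_single_same, Matrix.single_mul_single_of_ne, hij, hij.symm,
    Ne, not_false_iff, mul_one, one_mul, Matrix.zero_mul, Matrix.mul_zero]
  abel

lemma idT {i j k : Fin n} (hij : i ≠ j) (hjk : j ≠ k) (hik : i ≠ k) (c : ℤ) :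
    transvection i k c * transvection k j 1 =
      transvection i j c * (transvection k j 1 * transvection i k c) := by
  simp only [transvection, add_mul, mul_add, Matrix.one_mul, Matrix.mul_one,
    Matrix.single_mul_single_same, Matrix.single_mul_single_of_ne, hij, hjk, hik,
    hij.symm, hjk.symm, hik.symm, Ne, not_false_iff, mul_one, one_mul, Matrix.zero_mul, Matrix.mul_zero]
  abel

lemma third (hn : 3 ≤ n) (i j : Fin n) : ∃ k : Fin n, k ≠ i ∧ k ≠ j := by
  by_contra h
  push_neg at h
  have hsub : (Finset.univ : Finset (Fin n)) ⊆ {i, j} := by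
    intro k _
    rcases eq_or_ne k i with rfl | hk
    · simp
    · simp [h k hk]
  have h1 := Finset.card_le_card hsub
  rw [Finset.card_univ, Fintype.card_fin] at h1
  have h2 : ({i, j} : Finset (Fin n)).card ≤ 2 :=
    (Finset.card_insert_le _ _).trans (by simp)
  omega

end S14T
end Aux

/-- for `n ≥ 3`, every homomorphism `ℬ(ℤ) → ℂ*` is trivial:
any `χ` that is multiplicative and nonvanishing on `ℬ(ℤ)` equals `1` there. -/


theorem stmt14 (n : ℕ) (hn : 3 ≤ n) (χ : SpMat n → ℂ)
    (hmul : ∀ g h : SpMat n, g ∈ BZ n → h ∈ BZ n → χ (g * h) = χ g * χ h)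
    (hne : ∀ g ∈ BZ n, χ g ≠ 0) :
    ∀ g ∈ BZ n, χ g = 1 := by
  classical
  have h1mem : (1 : SpMat n) ∈ BZ n := by
    have := S14.mm_mem (n := n) (A := 1) (by simp)
    rwa [S14.mm_one] at this
  have hχ1 : χ 1 = 1 := by
    have h := hmul 1 1 h1mem h1mem
    rw [mul_one] at h
    exact (mul_left_cancel₀ (hne 1 h1mem) (by rw [mul_one, ← h])).symm
  have hfadd : ∀ S T : S14.IM n, Sᵀ = S → Tᵀ = T →
      χ (S14.uu (S + T)) = χ (S14.uu S) * χ (S14.uu T) := by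
    intro S T hS hT
    rw [← S14.uu_mul]
    exact hmul _ _ (S14.uu_mem hS) (S14.uu_mem hT)
  have hconj : ∀ (A S : S14.IM n), A.det = 1 → Sᵀ = S →
      χ (S14.uu (A * S * Aᵀ)) = χ (S14.uu S) := by
    intro A S hA hS
    have hsym2 : (A * S * Aᵀ)ᵀ = A * S * Aᵀ := by
      rw [Matrix.transpose_mul, Matrix.transpose_mul, Matrix.transpose_transpose, hS,
        Matrix.mul_assoc]
    have h1 := hmul _ _ (S14.mm_mem hA) (S14.uu_mem hS)
    have h2 := hmul _ _ (S14.uu_mem hsym2) (S14.mm_mem hA)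
    rw [← S14.mm_uu S hA] at h2
    rw [h2] at h1
    have hm := hne _ (S14.mm_mem hA)
    apply mul_right_cancel₀ hm
    rw [h1, mul_comm]
  have hdiff : ∀ (A S X : S14.IM n), A.det = 1 → Sᵀ = S → Xᵀ = X →
      A * S * Aᵀ = S + X → χ (S14.uu X) = 1 := by
    intro A S X hA hS hX heq
    have h1 := hconj A S hA hS
    rw [heq, hfadd S X hS hX] at h1
    exact mul_left_cancel₀ (hne _ (S14.uu_mem hS)) (by rw [h1, mul_one])
  have hdetT : ∀ (i j : Fin n), i ≠ j → ∀ c : ℤ, (Matrix.transvection i j c).det = 1 := by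
    intro i j hij c
    rw [← Matrix.TransvectionStruct.toMatrix_mk i j hij c]
    exact Matrix.TransvectionStruct.det _
  have gen1 : ∀ (i k : Fin n), i ≠ k → ∀ c : ℤ,
      χ (S14.uu (Matrix.single i k c + Matrix.single k i c)) = 1 := by
    intro i k hik c
    obtain ⟨j, hji, hjk⟩ := S14T.third hn i k
    refine hdiff (Matrix.transvection i j c)
      (Matrix.single j k 1 + Matrix.single k j 1) _
      (hdetT i j hji.symm c) ?_ ?_ ?_
    · rw [Matrix.transpose_add, S14T.stdT, S14T.stdT, add_comm]
    · rw [Matrix.transpose_add, S14T.stdT, S14T.stdT, add_comm]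
    · rw [S14T.transvection_transpose]
      exact S14T.idA hji.symm hjk hik c
  have gen2 : ∀ (i : Fin n) (m : ℤ), χ (S14.uu (Matrix.single i i m)) = 1 := by
    intro i
    obtain ⟨j, hji, _⟩ := S14T.third hn i i
    have hij : i ≠ j := hji.symm
    have hsq : ∀ c : ℤ, χ (S14.uu (Matrix.single i i (c * c))) = 1 := by
      intro c
      have hpairsym : (Matrix.single i j c + Matrix.single j i c)ᵀ =
          Matrix.single i j c + Matrix.single j i c := by
        rw [Matrix.transpose_add, S14T.stdT, S14T.stdT, add_comm]
      have hdsym : (Matrix.single i i (c * c))ᵀ = Matrix.single i i (c * c) :=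
        S14T.stdT i i _
      have h1 : χ (S14.uu ((Matrix.single i j c + Matrix.single j i c) +
          Matrix.single i i (c * c))) = 1 := by
        refine hdiff (Matrix.transvection i j c) (Matrix.single j j 1) _
          (hdetT i j hij c) (S14T.stdT j j 1) ?_ ?_
        · rw [Matrix.transpose_add, hpairsym, hdsym]
        · rw [S14T.transvection_transpose]
          exact S14T.idB hij c
      rw [hfadd _ _ hpairsym hdsym, gen1 i j hij c, one_mul] at h1
      exact h1
    have hq0 : χ (S14.uu (Matrix.single i i 0)) = 1 := by
      rw [Matrix.single_zero, S14.uu_zero, hχ1]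
    have hqadd : ∀ a b : ℤ, χ (S14.uu (Matrix.single i i (a + b))) =
        χ (S14.uu (Matrix.single i i a)) * χ (S14.uu (Matrix.single i i b)) := by
      intro a b
      rw [Matrix.single_add]
      exact hfadd _ _ (S14T.stdT i i a) (S14T.stdT i i b)
    have hq1 : χ (S14.uu (Matrix.single i i 1)) = 1 := by
      simpa using hsq 1
    have hqneg : χ (S14.uu (Matrix.single i i (-1))) = 1 := by
      have h := hqadd (-1) 1
      rw [hq1, mul_one, neg_add_cancel, hq0] at h
      exact h.symm
    intro m
    induction m using Int.induction_on with
    | zero => exact hq0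
    | succ k IH => rw [hqadd, IH, hq1, one_mul]
    | pred k IH =>
      have h := hqadd (-(k : ℤ)) (-1)
      rw [IH, hqneg, one_mul] at h
      rw [show (-(k : ℤ) - 1) = (-(k : ℤ)) + (-1) by ring]
      exact h
  have hfS : ∀ S : S14.IM n, Sᵀ = S → χ (S14.uu S) = 1 := by
    suffices H : ∀ m : ℕ, ∀ S : S14.IM n, Sᵀ = S →
        (Finset.univ.filter fun p : Fin n × Fin n => S p.1 p.2 ≠ 0).card = m →
        χ (S14.uu S) = 1 by
      intro S hS; exact H _ S hS rfl
    intro m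
    induction m using Nat.strong_induction_on with
    | _ m IH =>
    intro S hS hm
    by_cases h0 : S = 0
    · rw [h0, S14.uu_zero, hχ1]
    · have hex : ∃ p : Fin n × Fin n, S p.1 p.2 ≠ 0 := by
        by_contra h
        push_neg at h
        exact h0 (by ext a b; simpa using h (a, b))
      obtain ⟨⟨i, j⟩, hp⟩ := hex
      have hmemp : (i, j) ∈ Finset.univ.filter fun p : Fin n × Fin n => S p.1 p.2 ≠ 0 := by
        simp only [Finset.mem_filter, Finset.mem_univ, true_and]
        exact hp
      rcases eq_or_ne i j with rfl | hij
      · -- diagonal entry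
        set X : S14.IM n := Matrix.single i i (S i i) with hXdef
        set S' : S14.IM n := S - X with hS'def
        have hXsym : Xᵀ = X := S14T.stdT i i _
        have hS'sym : S'ᵀ = S' := by rw [hS'def, Matrix.transpose_sub, hS, hXsym]
        have hentry : ∀ a b, ¬(i = a ∧ i = b) → S' a b = S a b := by
          intro a b hab
          simp [hS'def, hXdef, Matrix.sub_apply, Matrix.single, hab]
        have hzero : S' i i = 0 := by
          simp [hS'def, hXdef, Matrix.sub_apply, Matrix.single]
        have hsub : (Finset.univ.filter fun p : Fin n × Fin n => S' p.1 p.2 ≠ 0) ⊆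
            (Finset.univ.filter fun p : Fin n × Fin n => S p.1 p.2 ≠ 0).erase (i, i) := by
          rintro ⟨a, b⟩ hq
          rw [Finset.mem_filter] at hq
          rw [Finset.mem_erase, Finset.mem_filter]
          by_cases hab : i = a ∧ i = b
          · obtain ⟨rfl, rfl⟩ := hab
            exact absurd hzero hq.2
          · refine ⟨?_, Finset.mem_univ _, by rw [← hentry a b hab]; exact hq.2⟩
            intro hcon
            apply hab
            rw [Prod.mk.injEq] at hcon
            exact ⟨hcon.1.symm, hcon.2.symm⟩
        have hcard : (Finset.univ.filter fun p : Fin n × Fin n => S' p.1 p.2 ≠ 0).card < m := by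
          have h1 := Finset.card_le_card hsub
          rw [Finset.card_erase_of_mem hmemp, hm] at h1
          have h2 : 0 < m := by
            rw [← hm]
            exact Finset.card_pos.mpr ⟨(i, i), hmemp⟩
          omega
        have hrec := IH _ hcard S' hS'sym rfl
        have hsplit : S = S' + X := by rw [hS'def, sub_add_cancel]
        rw [hsplit, hfadd _ _ hS'sym hXsym, hrec, gen2 i (S i i), one_mul]
      · -- off-diagonal entry
        have hsymval : S j i = S i j := by
          have h := congrFun (congrFun hS j) i
          simpa [Matrix.transpose_apply] using h.symm
        set X : S14.IM n := Matrix.single i j (S i j) + Matrix.single j i (S i j)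
          with hXdef
        set S' : S14.IM n := S - X with hS'def
        have hXsym : Xᵀ = X := by
          rw [hXdef, Matrix.transpose_add, S14T.stdT, S14T.stdT, add_comm]
        have hS'sym : S'ᵀ = S' := by rw [hS'def, Matrix.transpose_sub, hS, hXsym]
        have hentry : ∀ a b, ¬(i = a ∧ j = b) → ¬(j = a ∧ i = b) → S' a b = S a b := by
          intro a b h1 h2
          simp [hS'def, hXdef, Matrix.sub_apply, Matrix.add_apply, Matrix.single, h1, h2]
        have hzero1 : S' i j = 0 := by
          simp [hS'def, hXdef, Matrix.sub_apply, Matrix.add_apply, Matrix.single,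
            hij, Ne.symm hij]
        have hzero2 : S' j i = 0 := by
          simp [hS'def, hXdef, Matrix.sub_apply, Matrix.add_apply, Matrix.single,
            hij, Ne.symm hij, hsymval]
        have hsub : (Finset.univ.filter fun p : Fin n × Fin n => S' p.1 p.2 ≠ 0) ⊆
            (Finset.univ.filter fun p : Fin n × Fin n => S p.1 p.2 ≠ 0).erase (i, j) := by
          rintro ⟨a, b⟩ hq
          rw [Finset.mem_filter] at hq
          rw [Finset.mem_erase, Finset.mem_filter]
          by_cases h1 : i = a ∧ j = b
          · obtain ⟨rfl, rfl⟩ := h1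
            exact absurd hzero1 hq.2
          · by_cases h2 : j = a ∧ i = b
            · obtain ⟨rfl, rfl⟩ := h2
              exact absurd hzero2 hq.2
            · refine ⟨?_, Finset.mem_univ _, by rw [← hentry a b h1 h2]; exact hq.2⟩
              intro hcon
              apply h1
              rw [Prod.mk.injEq] at hcon
              exact ⟨hcon.1.symm, hcon.2.symm⟩
        have hcard : (Finset.univ.filter fun p : Fin n × Fin n => S' p.1 p.2 ≠ 0).card < m := by
          have h1 := Finset.card_le_card hsub
          rw [Finset.card_erase_of_mem hmemp, hm] at h1
          have h2 : 0 < m := by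
            rw [← hm]
            exact Finset.card_pos.mpr ⟨(i, j), hmemp⟩
          omega
        have hrec := IH _ hcard S' hS'sym rfl
        have hsplit : S = S' + X := by rw [hS'def, sub_add_cancel]
        rw [hsplit, hfadd _ _ hS'sym hXsym, hrec, gen1 i j hij (S i j), one_mul]
  have hmmul : ∀ A B : S14.IM n, A.det = 1 → B.det = 1 →
      χ (S14.mm (A * B)) = χ (S14.mm A) * χ (S14.mm B) := by
    intro A B hA hB
    rw [← S14.mm_mul hA hB]
    exact hmul _ _ (S14.mm_mem hA) (S14.mm_mem hB)
  have htrans : ∀ (i j : Fin n), i ≠ j → ∀ c : ℤ,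
      χ (S14.mm (Matrix.transvection i j c)) = 1 := by
    intro i j hij c
    obtain ⟨k, hki, hkj⟩ := S14T.third hn i j
    have hik : i ≠ k := hki.symm
    have hkj' : k ≠ j := hkj
    have hd1 : (Matrix.transvection i k c).det = 1 := hdetT i k hik c
    have hd2 : (Matrix.transvection k j (1 : ℤ)).det = 1 := hdetT k j hkj' (1 : ℤ)
    have hd3 : (Matrix.transvection i j c).det = 1 := hdetT i j hij c
    have hd4 : (Matrix.transvection k j (1 : ℤ) * Matrix.transvection i k c).det = 1 := by
      rw [Matrix.det_mul, hd2, hd1, one_mul]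
    have hL := hmmul _ _ hd1 hd2
    have hR := hmmul _ _ hd3 hd4
    have hR2 := hmmul _ _ hd2 hd1
    rw [← S14T.idT hij (Ne.symm hkj') hik c] at hR
    rw [hL] at hR
    rw [hR2] at hR
    -- hR : χ(mm Tik) * χ(mm Tkj) = χ(mm Tij) * (χ(mm Tkj) * χ(mm Tik))
    have hx := hne _ (S14.mm_mem hd1)
    have hy := hne _ (S14.mm_mem hd2)
    rw [mul_comm (χ (S14.mm (Matrix.transvection k j (1 : ℤ))))
      (χ (S14.mm (Matrix.transvection i k c)))] at hR
    have h6 : χ (S14.mm (Matrix.transvection i j c)) *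
        (χ (S14.mm (Matrix.transvection i k c)) * χ (S14.mm (Matrix.transvection k j (1 : ℤ)))) =
        (1 : ℂ) * (χ (S14.mm (Matrix.transvection i k c)) *
          χ (S14.mm (Matrix.transvection k j (1 : ℤ)))) := by
      rw [one_mul, ← hR]
    exact mul_right_cancel₀ (mul_ne_zero hx hy) h6
  have hprodL : ∀ L : List (Matrix.TransvectionStruct (Fin n) ℤ),
      χ (S14.mm ((L.map Matrix.TransvectionStruct.toMatrix).prod)) = 1 := by
    intro L
    induction L with
    | nil =>
      rw [List.map_nil, List.prod_nil, S14.mm_one, hχ1]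
    | cons t L IH =>
      rw [List.map_cons, List.prod_cons,
        hmmul _ _ (Matrix.TransvectionStruct.det t) (SLGen.det_transvec_prod L), IH, mul_one]
      rcases t with ⟨ti, tj, htij, tc⟩
      rw [Matrix.TransvectionStruct.toMatrix_mk]
      exact htrans ti tj htij tc
  have hmmA : ∀ A : S14.IM n, A.det = 1 → χ (S14.mm A) = 1 := by
    intro A hA
    obtain ⟨L, hL⟩ := SLGen.exists_transvec n A hA
    rw [hL]
    exact hprodL L
  intro g hg
  obtain ⟨A, S, hA, hSsym, hgeq⟩ := S14.decomp hg
  rw [hgeq, hmul _ _ (S14.mm_mem hA) (S14.uu_mem hSsym), hmmA A hA, hfS S hSsym, one_mul]
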